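/- Let k = ℂ, n = 2m, and consider the basic G_a-action on V = ℂ^{n+1}. Every point (a,b) in the Zariski closure of the graph Γ = {(x, t*x)} that does not lie in Γ itself satisfies: the first m coordinates of a and of b vanish, and b_m = (-1)^m a_m. -/

import Mathlib

/-- The basic `G_a`-action on `k^{n+1}`. -/
def gaAct (k : Type*) [Field k] (n : ℕ) (t : k) (z : Fin (n + 1) → k) :
    Fin (n + 1) → k :=
  fun j => ∑ i ∈ Finset.Iic j,
    t ^ ((j : ℕ) - (i : ℕ)) / (((j : ℕ) - (i : ℕ)).factorial : k) * z i

namespace GaAux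

open Finset PowerSeries

/-- Sequence-level action: `(t ⋆ x)_j`. -/
noncomputable def sAct (t : ℂ) (x : ℕ → ℂ) (j : ℕ) : ℂ :=
  ∑ i ∈ Finset.range (j + 1), t ^ (j - i) / ((j - i).factorial : ℂ) * x i

lemma coeff_rescale_exp (c : ℂ) (k : ℕ) :
    (PowerSeries.coeff k) (rescale c (exp ℂ)) = c ^ k / (k.factorial : ℂ) := by
  rw [coeff_rescale, coeff_exp, map_div₀, map_one, map_natCast]
  ring

lemma mk_sAct (t : ℂ) (x : ℕ → ℂ) :
    rescale t (exp ℂ) * PowerSeries.mk x = PowerSeries.mk (sAct t x) := by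
  ext j
  rw [coeff_mul, Finset.Nat.sum_antidiagonal_eq_sum_range_succ_mk, coeff_mk, sAct,
    ← Finset.sum_range_reflect]
  apply Finset.sum_congr rfl
  intro i hi
  have hi' : i ≤ j := Nat.lt_succ_iff.mp (Finset.mem_range.mp hi)
  rw [coeff_rescale_exp, coeff_mk]
  have h1 : j + 1 - 1 - i = j - i := by omega
  have h2 : j - (j - i) = i := by omega
  rw [h1, h2]

lemma d_rescale_exp (c : ℂ) :
    d⁄dX ℂ (rescale c (exp ℂ)) = PowerSeries.C c * rescale c (exp ℂ) := by
  ext n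
  rw [coeff_derivative, coeff_rescale_exp, PowerSeries.coeff_C_mul, coeff_rescale_exp]
  have h1 : ((n + 1).factorial : ℂ) = ((n : ℂ) + 1) * (n.factorial : ℂ) := by
    rw [Nat.factorial_succ]; push_cast; ring
  have h2 : (n.factorial : ℂ) ≠ 0 := Nat.cast_ne_zero.mpr (Nat.factorial_ne_zero n)
  have h3 : ((n : ℂ) + 1) ≠ 0 := Nat.cast_add_one_ne_zero n
  rw [h1]
  field_simp
  ring

lemma exp_pair (t : ℂ) :
    rescale t (exp ℂ) * rescale (-t) (exp ℂ) = 1 := by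
  have h := congrArg (rescale t) (PowerSeries.exp_mul_exp_neg_eq_one (A := ℂ))
  rw [map_mul, map_one] at h
  have h2 : rescale t (evalNegHom (exp ℂ)) = rescale (-t) (exp ℂ) := by
    show rescale t (rescale (-1) (exp ℂ)) = _
    rw [rescale_rescale]
    norm_num
  rwa [h2] at h

lemma coeff_mul_range (f g : PowerSeries ℂ) (N : ℕ) :
    (PowerSeries.coeff N) (f * g)
      = ∑ i ∈ Finset.range (N + 1),
          (PowerSeries.coeff i) f * (PowerSeries.coeff (N - i)) g := by
  rw [coeff_mul, Finset.Nat.sum_antidiagonal_eq_sum_range_succ_mk]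

/-- Identity (L1): the Wronskian pair. -/
lemma L1 (x : ℕ → ℂ) (t : ℂ) (l : ℕ) :
    ∑ i ∈ Finset.range (l + 1),
        ((i : ℂ) + 1) * (sAct t x (i + 1) * x (l - i) - x (i + 1) * sAct t x (l - i))
      = t * ∑ i ∈ Finset.range (l + 1), x i * sAct t x (l - i) := by
  have hQ : rescale t (exp ℂ) * PowerSeries.mk x = PowerSeries.mk (sAct t x) := mk_sAct t x
  have hdQ : d⁄dX ℂ (PowerSeries.mk (sAct t x))
      = PowerSeries.C t * PowerSeries.mk (sAct t x)
        + rescale t (exp ℂ) * d⁄dX ℂ (PowerSeries.mk x) := by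
    rw [← hQ, Derivation.leibniz, smul_eq_mul, smul_eq_mul, d_rescale_exp]
    ring
  have key : d⁄dX ℂ (PowerSeries.mk (sAct t x)) * PowerSeries.mk x
        - d⁄dX ℂ (PowerSeries.mk x) * PowerSeries.mk (sAct t x)
      = PowerSeries.C t * (PowerSeries.mk (sAct t x) * PowerSeries.mk x) := by
    rw [hdQ, ← hQ]; ring
  have hc := congrArg (PowerSeries.coeff l) key
  rw [map_sub, coeff_mul_range, coeff_mul_range, PowerSeries.coeff_C_mul, coeff_mul_range] at hc
  simp only [coeff_derivative, coeff_mk] at hc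
  rw [← Finset.sum_sub_distrib] at hc
  calc ∑ i ∈ Finset.range (l + 1),
        ((i : ℂ) + 1) * (sAct t x (i + 1) * x (l - i) - x (i + 1) * sAct t x (l - i))
      = ∑ i ∈ Finset.range (l + 1),
        (sAct t x (i + 1) * ((i : ℂ) + 1) * x (l - i)
          - x (i + 1) * ((i : ℂ) + 1) * sAct t x (l - i)) := by
        apply Finset.sum_congr rfl; intro i _; push_cast; ring
    _ = t * ∑ i ∈ Finset.range (l + 1), sAct t x i * x (l - i) := hc
    _ = t * ∑ i ∈ Finset.range (l + 1), x i * sAct t x (l - i) := by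
        congr 1
        rw [← Finset.sum_range_reflect]
        apply Finset.sum_congr rfl
        intro i hi
        have hi' : i ≤ l := Nat.lt_succ_iff.mp (Finset.mem_range.mp hi)
        have h1 : l - (l - i) = i := by omega
        have h2 : l + 1 - 1 - i = l - i := by omega
        rw [h2, h1, mul_comm]

/-- The `σ` sequence. -/
noncomputable def sig (t : ℂ) (x : ℕ → ℂ) (i : ℕ) : ℂ :=
  x i - (-1 : ℂ) ^ i * sAct t x i

lemma sig_zero (t : ℂ) (x : ℕ → ℂ) : sig t x 0 = 0 := by
  simp [sig, sAct]

/-- Identity (L2): the σ-pair. -/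
lemma L2 (x : ℕ → ℂ) (t : ℂ) (w : ℕ) :
    ∑ i ∈ Finset.range (2 * w + 1),
        ((i : ℂ) + 1) * ((-1 : ℂ) ^ (2 * w - i) - (-1 : ℂ) ^ (i + 1))
          * sig t x (i + 1) * sig t x (2 * w - i)
      + t * ∑ i ∈ Finset.range (2 * w + 1),
          (-1 : ℂ) ^ (2 * w - i) * sig t x i * sig t x (2 * w - i) = 0 := by
  set E := rescale t (exp ℂ) with hEdef
  set Et := rescale (-t) (exp ℂ) with hEtdef
  set Xs := PowerSeries.mk x with hXsdef
  set Xt := rescale (-1 : ℂ) Xs with hXtdef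
  have hE1 : rescale (-1 : ℂ) E = Et := by
    rw [hEdef, hEtdef, rescale_rescale]; norm_num
  set g := Xs - Et * Xt with hgdef
  set gh := Xt - E * Xs with hghdef
  have hmixed : Et * Xt = rescale (-1 : ℂ) (PowerSeries.mk (sAct t x)) := by
    rw [← mk_sAct t x, map_mul, hE1, hXtdef]
  have hmixed2 : E * Xs = PowerSeries.mk (sAct t x) := mk_sAct t x
  have hcg : ∀ i, (PowerSeries.coeff i) g = sig t x i := by
    intro i
    rw [hgdef, map_sub, hmixed, coeff_rescale, hXsdef, coeff_mk, coeff_mk, sig]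
  have hcgh : ∀ i, (PowerSeries.coeff i) gh = (-1 : ℂ) ^ i * sig t x i := by
    intro i
    rw [hghdef, map_sub, hmixed2, hXtdef, coeff_rescale, hXsdef, coeff_mk, coeff_mk, sig]
    have h2 : (-1 : ℂ) ^ i * (-1 : ℂ) ^ i = 1 := by
      rw [← pow_add]
      exact Even.neg_one_pow ⟨i, rfl⟩
    linear_combination sAct t x i * h2
  have hdg : d⁄dX ℂ g = d⁄dX ℂ Xs + PowerSeries.C t * (Et * Xt) - Et * d⁄dX ℂ Xt := by
    rw [hgdef, map_sub, Derivation.leibniz, smul_eq_mul, smul_eq_mul]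
    have hdet : d⁄dX ℂ Et = PowerSeries.C (-t) * Et := d_rescale_exp (-t)
    rw [hdet, map_neg]
    ring
  have hdgh : d⁄dX ℂ gh = d⁄dX ℂ Xt - PowerSeries.C t * (E * Xs) - E * d⁄dX ℂ Xs := by
    rw [hghdef, map_sub, Derivation.leibniz, smul_eq_mul, smul_eq_mul]
    have hde : d⁄dX ℂ E = PowerSeries.C t * E := d_rescale_exp t
    rw [hde]
    ring
  have hpair : E * Et = 1 := exp_pair t
  have key : d⁄dX ℂ g * gh - d⁄dX ℂ gh * g + PowerSeries.C t * (g * gh) = 0 := by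
    rw [hdg, hdgh, hgdef, hghdef]
    linear_combination (-(Xt * d⁄dX ℂ Xs - Xs * d⁄dX ℂ Xt
      + PowerSeries.C t * (Xs * Xt))) * hpair
  have hc := congrArg (PowerSeries.coeff (2 * w)) key
  rw [map_add, map_sub, PowerSeries.coeff_C_mul, coeff_mul_range, coeff_mul_range,
    coeff_mul_range, map_zero] at hc
  simp only [coeff_derivative, hcg, hcgh] at hc
  rw [← Finset.sum_sub_distrib] at hc
  calc ∑ i ∈ Finset.range (2 * w + 1),
        ((i : ℂ) + 1) * ((-1 : ℂ) ^ (2 * w - i) - (-1 : ℂ) ^ (i + 1))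
          * sig t x (i + 1) * sig t x (2 * w - i)
      + t * ∑ i ∈ Finset.range (2 * w + 1),
          (-1 : ℂ) ^ (2 * w - i) * sig t x i * sig t x (2 * w - i)
      = (∑ i ∈ Finset.range (2 * w + 1),
          (sig t x (i + 1) * ((i : ℂ) + 1) * ((-1 : ℂ) ^ (2 * w - i) * sig t x (2 * w - i))
            - (-1 : ℂ) ^ (i + 1) * sig t x (i + 1) * ((i : ℂ) + 1) * sig t x (2 * w - i)))
        + t * ∑ i ∈ Finset.range (2 * w + 1),
            sig t x i * ((-1 : ℂ) ^ (2 * w - i) * sig t x (2 * w - i)) := by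
        congr 1
        · apply Finset.sum_congr rfl; intro i _; push_cast; ring
        · congr 1; apply Finset.sum_congr rfl; intro i _; ring
    _ = 0 := hc

end GaAux

namespace GaMain

open Finset MvPolynomial GaAux

variable (m : ℕ)

/-- Truncating embedding `ℕ → Fin (2m+1)`. -/
def idx (i : ℕ) : Fin (2 * m + 1) := ⟨min i (2 * m), by omega⟩

/-- Padded sequence. -/
def pad (c : Fin (2 * m + 1) → ℂ) (i : ℕ) : ℂ :=
  if h : i ≤ 2 * m then c ⟨i, by omega⟩ else 0

noncomputable def Xl (i : ℕ) : MvPolynomial (Fin (2 * m + 1) ⊕ Fin (2 * m + 1)) ℂ :=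
  X (Sum.inl (idx m i))

noncomputable def Xr (i : ℕ) : MvPolynomial (Fin (2 * m + 1) ⊕ Fin (2 * m + 1)) ℂ :=
  X (Sum.inr (idx m i))

lemma pad_eq (c : Fin (2 * m + 1) → ℂ) {i : ℕ} (h : i ≤ 2 * m) :
    pad m c i = c ⟨i, by omega⟩ := dif_pos h

lemma eval_Xl (u v : Fin (2 * m + 1) → ℂ) {i : ℕ} (h : i ≤ 2 * m) :
    eval (Sum.elim u v) (Xl m i) = pad m u i := by
  rw [Xl, eval_X, Sum.elim_inl, pad_eq m u h, idx]
  congr 1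
  exact Fin.ext (by simp [min_eq_left h])

lemma eval_Xr (u v : Fin (2 * m + 1) → ℂ) {i : ℕ} (h : i ≤ 2 * m) :
    eval (Sum.elim u v) (Xr m i) = pad m v i := by
  rw [Xr, eval_X, Sum.elim_inr, pad_eq m v h, idx]
  congr 1
  exact Fin.ext (by simp [min_eq_left h])

/-- `gaAct` agrees with the sequence-level action on padded sequences. -/
lemma gaAct_pad (x : Fin (2 * m + 1) → ℂ) (t : ℂ) {j : ℕ} (h : j ≤ 2 * m) :
    pad m (gaAct ℂ (2 * m) t x) j = sAct t (pad m x) j := by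
  rw [pad_eq m _ h, gaAct, sAct]
  exact Finset.sum_nbij'
    (fun (i : Fin (2 * m + 1)) => (i : ℕ))
    (fun (i : ℕ) => (⟨min i (2 * m), by omega⟩ : Fin (2 * m + 1)))
    (fun i hi => by
      simp only [Finset.mem_Iic] at hi
      simp only [Finset.mem_range]
      have h2 : (i : ℕ) ≤ j := hi
      omega)
    (fun i hi => by
      simp only [Finset.mem_range] at hi
      simp only [Finset.mem_Iic]
      show (⟨min i (2 * m), _⟩ : Fin (2 * m + 1)) ≤ ⟨j, _⟩
      rw [Fin.mk_le_mk]
      omega)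
    (fun i hi => by
      apply Fin.ext
      simp only []
      have : (i : ℕ) ≤ 2 * m := by omega
      simp [min_eq_left this])
    (fun i hi => by
      simp only [Finset.mem_range] at hi
      simp only []
      omega)
    (fun i hi => by
      simp only [Finset.mem_Iic] at hi
      have hle : (i : ℕ) ≤ 2 * m := by omega
      rw [pad_eq m x hle])

/-- An exact pair: `N = t·D` on the graph. -/
def PairOn (D N : MvPolynomial (Fin (2 * m + 1) ⊕ Fin (2 * m + 1)) ℂ) : Prop :=
  ∀ (x : Fin (2 * m + 1) → ℂ) (t : ℂ),
    eval (Sum.elim x (gaAct ℂ (2 * m) t x)) N = t * eval (Sum.elim x (gaAct ℂ (2 * m) t x)) D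

/-- From an exact pair with nonvanishing denominator at `(a,b)` we find `t` with `t ⋆ a = b`. -/
lemma pair_exists (a b : Fin (2 * m + 1) → ℂ)
    (hclos : ∀ P : MvPolynomial (Fin (2 * m + 1) ⊕ Fin (2 * m + 1)) ℂ,
      (∀ (x : Fin (2 * m + 1) → ℂ) (t : ℂ),
        MvPolynomial.eval (Sum.elim x (gaAct ℂ (2 * m) t x)) P = 0) →
      MvPolynomial.eval (Sum.elim a b) P = 0)
    (D N : MvPolynomial (Fin (2 * m + 1) ⊕ Fin (2 * m + 1)) ℂ)
    (hDN : PairOn m D N)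
    (hδ : eval (Sum.elim a b) D ≠ 0) :
    ∃ t : ℂ, gaAct ℂ (2 * m) t a = b := by
  set δ := eval (Sum.elim a b) D with hδdef
  set ν := eval (Sum.elim a b) N with hνdef
  refine ⟨ν / δ, ?_⟩
  funext k
  have hkle : (k : ℕ) ≤ 2 * m := by omega
  set Pk : MvPolynomial (Fin (2 * m + 1) ⊕ Fin (2 * m + 1)) ℂ :=
    Xr m (k : ℕ) * D ^ (k : ℕ)
      - ∑ i ∈ Finset.range ((k : ℕ) + 1),
          MvPolynomial.C (1 / (((k : ℕ) - i).factorial : ℂ)) * N ^ ((k : ℕ) - i) * D ^ i * Xl m i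
    with hPkdef
  have hvan : ∀ (x : Fin (2 * m + 1) → ℂ) (t : ℂ),
      eval (Sum.elim x (gaAct ℂ (2 * m) t x)) Pk = 0 := by
    intro x t
    have hev : eval (Sum.elim x (gaAct ℂ (2 * m) t x)) Pk
        = sAct t (pad m x) (k : ℕ) * (eval (Sum.elim x (gaAct ℂ (2 * m) t x)) D) ^ (k : ℕ)
          - ∑ i ∈ Finset.range ((k : ℕ) + 1),
              1 / (((k : ℕ) - i).factorial : ℂ)
                * (eval (Sum.elim x (gaAct ℂ (2 * m) t x)) N) ^ ((k : ℕ) - i)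
                * (eval (Sum.elim x (gaAct ℂ (2 * m) t x)) D) ^ i
                * pad m x i := by
      rw [hPkdef, map_sub, map_mul, map_pow, eval_Xr m _ _ hkle, map_sum,
        gaAct_pad m x t hkle]
      congr 1
      apply Finset.sum_congr rfl
      intro i hi
      have hile : i ≤ 2 * m := by
        have := Finset.mem_range.mp hi; omega
      rw [map_mul, map_mul, map_mul, eval_C, map_pow, map_pow, eval_Xl m _ _ hile]
    rw [hev, hDN x t]
    set dv := eval (Sum.elim x (gaAct ℂ (2 * m) t x)) D
    rw [sAct, Finset.sum_mul, ← Finset.sum_sub_distrib]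
    apply Finset.sum_eq_zero
    intro i hi
    have hik : i ≤ (k : ℕ) := Nat.lt_succ_iff.mp (Finset.mem_range.mp hi)
    have hp : (t * dv) ^ ((k : ℕ) - i) * dv ^ i = t ^ ((k : ℕ) - i) * dv ^ (k : ℕ) := by
      rw [mul_pow, mul_assoc, ← pow_add]
      congr 2
      omega
    rw [mul_assoc (1 / (((k : ℕ) - i).factorial : ℂ)), hp]
    field_simp
    ring
  have h0 := hclos Pk hvan
  have hev2 : eval (Sum.elim a b) Pk
      = pad m b (k : ℕ) * δ ^ (k : ℕ)
        - ∑ i ∈ Finset.range ((k : ℕ) + 1),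
            1 / (((k : ℕ) - i).factorial : ℂ) * ν ^ ((k : ℕ) - i) * δ ^ i * pad m a i := by
    rw [hPkdef, map_sub, map_mul, map_pow, eval_Xr m _ _ hkle, map_sum]
    congr 1
    apply Finset.sum_congr rfl
    intro i hi
    have hile : i ≤ 2 * m := by
      have := Finset.mem_range.mp hi; omega
    rw [map_mul, map_mul, map_mul, eval_C, map_pow, map_pow, eval_Xl m _ _ hile]
  rw [hev2, sub_eq_zero] at h0
  have hgoal : pad m b (k : ℕ)
      = ∑ i ∈ Finset.range ((k : ℕ) + 1),
          (ν / δ) ^ ((k : ℕ) - i) / (((k : ℕ) - i).factorial : ℂ) * pad m a i := by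
    apply mul_right_cancel₀ (pow_ne_zero (k : ℕ) hδ)
    rw [h0, Finset.sum_mul]
    apply Finset.sum_congr rfl
    intro i hi
    have hik : i ≤ (k : ℕ) := Nat.lt_succ_iff.mp (Finset.mem_range.mp hi)
    have hpow : (ν / δ) ^ ((k : ℕ) - i) * δ ^ (k : ℕ) = ν ^ ((k : ℕ) - i) * δ ^ i := by
      rw [div_pow, div_mul_eq_mul_div, div_eq_iff (pow_ne_zero _ hδ), mul_assoc, ← pow_add]
      congr 2
      omega
    calc 1 / (((k : ℕ) - i).factorial : ℂ) * ν ^ ((k : ℕ) - i) * δ ^ i * pad m a i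
        = ((ν / δ) ^ ((k : ℕ) - i) * δ ^ (k : ℕ)) * pad m a i
            * (1 / (((k : ℕ) - i).factorial : ℂ)) := by rw [hpow]; ring
      _ = (ν / δ) ^ ((k : ℕ) - i) / (((k : ℕ) - i).factorial : ℂ) * pad m a i
            * δ ^ (k : ℕ) := by ring
  have h1 : gaAct ℂ (2 * m) (ν / δ) a k = sAct (ν / δ) (pad m a) (k : ℕ) := by
    rw [← gaAct_pad m a (ν / δ) hkle, pad_eq m _ hkle]
  have h2 : b k = pad m b (k : ℕ) := by
    rw [pad_eq m b hkle]
  rw [h1, h2, hgoal, sAct]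

noncomputable def BP (l : ℕ) : MvPolynomial (Fin (2 * m + 1) ⊕ Fin (2 * m + 1)) ℂ :=
  ∑ i ∈ Finset.range (l + 1), Xl m i * Xr m (l - i)

noncomputable def AP (l : ℕ) : MvPolynomial (Fin (2 * m + 1) ⊕ Fin (2 * m + 1)) ℂ :=
  ∑ i ∈ Finset.range (l + 1),
    MvPolynomial.C ((i : ℂ) + 1) * (Xr m (i + 1) * Xl m (l - i) - Xl m (i + 1) * Xr m (l - i))

lemma eval_BP (u v : Fin (2 * m + 1) → ℂ) {l : ℕ} (hl : l ≤ 2 * m) :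
    eval (Sum.elim u v) (BP m l)
      = ∑ i ∈ Finset.range (l + 1), pad m u i * pad m v (l - i) := by
  rw [BP, map_sum]
  apply Finset.sum_congr rfl
  intro i hi
  have hile : i ≤ 2 * m := by
    have := Nat.lt_succ_iff.mp (Finset.mem_range.mp hi); omega
  rw [map_mul, eval_Xl m _ _ hile, eval_Xr m _ _ (by omega)]

lemma pair_BA {l : ℕ} (hl : l + 1 ≤ 2 * m) : PairOn m (BP m l) (AP m l) := by
  intro x t
  have hevA : eval (Sum.elim x (gaAct ℂ (2 * m) t x)) (AP m l)
      = ∑ i ∈ Finset.range (l + 1),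
          ((i : ℂ) + 1) * (sAct t (pad m x) (i + 1) * pad m x (l - i)
            - pad m x (i + 1) * sAct t (pad m x) (l - i)) := by
    rw [AP, map_sum]
    apply Finset.sum_congr rfl
    intro i hi
    have hi' : i ≤ l := Nat.lt_succ_iff.mp (Finset.mem_range.mp hi)
    rw [map_mul, eval_C, map_sub, map_mul, map_mul,
      eval_Xr m _ _ (by omega), eval_Xl m _ _ (by omega),
      eval_Xl m _ _ (by omega : i + 1 ≤ 2 * m), eval_Xr m _ _ (by omega),
      gaAct_pad m x t (by omega : i + 1 ≤ 2 * m), gaAct_pad m x t (by omega : l - i ≤ 2 * m)]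
  rw [hevA, eval_BP m _ _ (by omega : l ≤ 2 * m), L1 (pad m x) t l]
  congr 1
  apply Finset.sum_congr rfl
  intro i hi
  have hi' : i ≤ l := Nat.lt_succ_iff.mp (Finset.mem_range.mp hi)
  rw [gaAct_pad m x t (by omega : l - i ≤ 2 * m)]

noncomputable def sigP (j : ℕ) : MvPolynomial (Fin (2 * m + 1) ⊕ Fin (2 * m + 1)) ℂ :=
  Xl m j - MvPolynomial.C ((-1 : ℂ) ^ j) * Xr m j

lemma eval_sigP (u v : Fin (2 * m + 1) → ℂ) {j : ℕ} (h : j ≤ 2 * m) :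
    eval (Sum.elim u v) (sigP m j) = pad m u j - (-1 : ℂ) ^ j * pad m v j := by
  rw [sigP, map_sub, map_mul, eval_C, eval_Xl m _ _ h, eval_Xr m _ _ h]

lemma eval_sigP_graph (x : Fin (2 * m + 1) → ℂ) (t : ℂ) {j : ℕ} (h : j ≤ 2 * m) :
    eval (Sum.elim x (gaAct ℂ (2 * m) t x)) (sigP m j) = sig t (pad m x) j := by
  rw [eval_sigP m _ _ h, gaAct_pad m x t h, sig]

noncomputable def DP (w : ℕ) : MvPolynomial (Fin (2 * m + 1) ⊕ Fin (2 * m + 1)) ℂ :=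
  ∑ i ∈ Finset.range (2 * w + 1),
    MvPolynomial.C ((-1 : ℂ) ^ (2 * w - i)) * sigP m i * sigP m (2 * w - i)

noncomputable def NP (w : ℕ) : MvPolynomial (Fin (2 * m + 1) ⊕ Fin (2 * m + 1)) ℂ :=
  ∑ i ∈ Finset.range (2 * w),
    MvPolynomial.C (((i : ℂ) + 1) * ((-1 : ℂ) ^ (2 * w - i) - (-1 : ℂ) ^ (i + 1)))
      * sigP m (i + 1) * sigP m (2 * w - i)

lemma eval_DP (u v : Fin (2 * m + 1) → ℂ) {w : ℕ} (hw : 2 * w ≤ 2 * m) :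
    eval (Sum.elim u v) (DP m w)
      = ∑ i ∈ Finset.range (2 * w + 1),
          (-1 : ℂ) ^ (2 * w - i) * (pad m u i - (-1 : ℂ) ^ i * pad m v i)
            * (pad m u (2 * w - i) - (-1 : ℂ) ^ (2 * w - i) * pad m v (2 * w - i)) := by
  rw [DP, map_sum]
  apply Finset.sum_congr rfl
  intro i hi
  have hi' : i ≤ 2 * w := Nat.lt_succ_iff.mp (Finset.mem_range.mp hi)
  rw [map_mul, map_mul, eval_C, eval_sigP m _ _ (by omega), eval_sigP m _ _ (by omega)]

lemma pair_DN {w : ℕ} (hw : 2 * w ≤ 2 * m) : PairOn m (DP m w) (-NP m w) := by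
  intro x t
  have hevN : eval (Sum.elim x (gaAct ℂ (2 * m) t x)) (NP m w)
      = ∑ i ∈ Finset.range (2 * w),
          ((i : ℂ) + 1) * ((-1 : ℂ) ^ (2 * w - i) - (-1 : ℂ) ^ (i + 1))
            * sig t (pad m x) (i + 1) * sig t (pad m x) (2 * w - i) := by
    rw [NP, map_sum]
    apply Finset.sum_congr rfl
    intro i hi
    have hi' : i < 2 * w := Finset.mem_range.mp hi
    rw [map_mul, map_mul, eval_C, eval_sigP_graph m x t (by omega : i + 1 ≤ 2 * m),
      eval_sigP_graph m x t (by omega)]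
  have hevD : eval (Sum.elim x (gaAct ℂ (2 * m) t x)) (DP m w)
      = ∑ i ∈ Finset.range (2 * w + 1),
          (-1 : ℂ) ^ (2 * w - i) * sig t (pad m x) i * sig t (pad m x) (2 * w - i) := by
    rw [DP, map_sum]
    apply Finset.sum_congr rfl
    intro i hi
    have hi' : i ≤ 2 * w := Nat.lt_succ_iff.mp (Finset.mem_range.mp hi)
    rw [map_mul, map_mul, eval_C, eval_sigP_graph m x t (by omega),
      eval_sigP_graph m x t (by omega)]
  have hL2 := L2 (pad m x) t w
  rw [Finset.sum_range_succ] at hL2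
  simp only [Nat.sub_self, sig_zero, mul_zero, add_zero] at hL2
  rw [map_neg, hevN, hevD]
  linear_combination -hL2

end GaMain

/-- Let `n = 2m`. Every point `(a,b)` of the Zariski closure of the graph
`Γ = {(x, t*x)}` of the basic `G_a`-action on `ℂ^{n+1}` which is not in `Γ`
satisfies: the first `m` coordinates of `a` and `b` vanish and `b_m = (-1)^m a_m`. -/
theorem graph_closure_minus_graph (m : ℕ) (a b : Fin (2 * m + 1) → ℂ)
    (hclos : ∀ P : MvPolynomial (Fin (2 * m + 1) ⊕ Fin (2 * m + 1)) ℂ,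
      (∀ (x : Fin (2 * m + 1) → ℂ) (t : ℂ),
        MvPolynomial.eval (Sum.elim x (gaAct ℂ (2 * m) t x)) P = 0) →
      MvPolynomial.eval (Sum.elim a b) P = 0)
    (hnot : ¬ ∃ t : ℂ, gaAct ℂ (2 * m) t a = b) :
    (∀ i : Fin (2 * m + 1), (i : ℕ) < m → a i = 0 ∧ b i = 0) ∧
    b ⟨m, by omega⟩ = (-1 : ℂ) ^ m * a ⟨m, by omega⟩ := by
  classical
  set pa := GaMain.pad m a with hpa
  set pb := GaMain.pad m b with hpb
  -- consequence of exact pairs: denominators vanish at (a,b)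
  have hBzero : ∀ l : ℕ, l + 1 ≤ 2 * m →
      ∑ i ∈ Finset.range (l + 1), pa i * pb (l - i) = 0 := by
    intro l hl
    by_contra hne
    apply hnot
    refine GaMain.pair_exists m a b hclos (GaMain.BP m l) (GaMain.AP m l)
      (GaMain.pair_BA m hl) ?_
    rw [GaMain.eval_BP m a b (by omega : l ≤ 2 * m)]
    exact hne
  have hDzero : ∀ w : ℕ, w ≤ m →
      ∑ i ∈ Finset.range (2 * w + 1),
        (-1 : ℂ) ^ (2 * w - i) * (pa i - (-1 : ℂ) ^ i * pb i)
          * (pa (2 * w - i) - (-1 : ℂ) ^ (2 * w - i) * pb (2 * w - i)) = 0 := by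
    intro w hw
    by_contra hne
    apply hnot
    refine GaMain.pair_exists m a b hclos (GaMain.DP m w) (-(GaMain.NP m w))
      (GaMain.pair_DN m (by omega : 2 * w ≤ 2 * m)) ?_
    rw [GaMain.eval_DP m a b (by omega : 2 * w ≤ 2 * m)]
    exact hne
  -- step 2: a vanishes below m
  have claim1 : ∀ r : ℕ, r < m → pa r = 0 := by
    intro r
    induction r using Nat.strong_induction_on with
    | _ r ih =>
      intro hrm
      by_contra har
      have hbz : ∀ j : ℕ, j ≤ 2 * m - 1 - r → pb j = 0 := by
        intro j
        induction j using Nat.strong_induction_on with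
        | _ j ihj =>
          intro hj
          have hBl := hBzero (r + j) (by omega)
          have hsingle : ∑ i ∈ Finset.range (r + j + 1), pa i * pb (r + j - i)
              = pa r * pb (r + j - r) := by
            apply Finset.sum_eq_single_of_mem r (Finset.mem_range.mpr (by omega))
            intro i hi hne
            rcases lt_or_gt_of_ne hne with hlt | hgt
            · rw [ih i hlt (by omega), zero_mul]
            · have h1 : r + j - i < j := by
                have := Nat.lt_succ_iff.mp (Finset.mem_range.mp hi)
                omega
              rw [ihj (r + j - i) h1 (by omega), mul_zero]
          rw [hsingle] at hBl
          have h2 : r + j - r = j := by omega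
          rw [h2] at hBl
          exact (mul_eq_zero.mp hBl).resolve_left har
      have hD := hDzero r (by omega)
      have hsingle : ∑ i ∈ Finset.range (2 * r + 1),
          (-1 : ℂ) ^ (2 * r - i) * (pa i - (-1 : ℂ) ^ i * pb i)
            * (pa (2 * r - i) - (-1 : ℂ) ^ (2 * r - i) * pb (2 * r - i))
          = (-1 : ℂ) ^ r * pa r * pa r := by
        have hr1 : 2 * r - r = r := by omega
        have hpbr : pb r = 0 := hbz r (by omega)
        rw [Finset.sum_eq_single_of_mem r (Finset.mem_range.mpr (by omega))]
        · rw [hr1, hpbr]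
          ring
        · intro i hi hne
          rcases lt_or_gt_of_ne hne with hlt | hgt
          · have hz : pa i - (-1 : ℂ) ^ i * pb i = 0 := by
              rw [ih i hlt (by omega), hbz i (by omega)]
              ring
            rw [hz]
            ring
          · have hlt2 : 2 * r - i < r := by
              have := Nat.lt_succ_iff.mp (Finset.mem_range.mp hi)
              omega
            have hz : pa (2 * r - i) - (-1 : ℂ) ^ (2 * r - i) * pb (2 * r - i) = 0 := by
              rw [ih (2 * r - i) hlt2 (by omega), hbz (2 * r - i) (by omega)]
              ring
            rw [hz]
            ring
      rw [hsingle] at hD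
      have hne1 := pow_ne_zero r ((by norm_num : (-1:ℂ) ≠ 0))
      rcases mul_eq_zero.mp hD with h | h
      · rcases mul_eq_zero.mp h with h' | h'
        · exact hne1 h'
        · exact har h'
      · exact har h
  -- step 3: b vanishes below m
  have claim2 : ∀ s : ℕ, s < m → pb s = 0 := by
    intro s
    induction s using Nat.strong_induction_on with
    | _ s ihs =>
      intro hsm
      have hD := hDzero s (by omega)
      have hsingle : ∑ i ∈ Finset.range (2 * s + 1),
          (-1 : ℂ) ^ (2 * s - i) * (pa i - (-1 : ℂ) ^ i * pb i)
            * (pa (2 * s - i) - (-1 : ℂ) ^ (2 * s - i) * pb (2 * s - i))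
          = (-1 : ℂ) ^ s * ((-1 : ℂ) ^ s * pb s) * ((-1 : ℂ) ^ s * pb s) := by
        have hs1 : 2 * s - s = s := by omega
        have hpas : pa s = 0 := claim1 s hsm
        rw [Finset.sum_eq_single_of_mem s (Finset.mem_range.mpr (by omega))]
        · rw [hs1, hpas]
          ring
        · intro i hi hne
          rcases lt_or_gt_of_ne hne with hlt | hgt
          · have hz : pa i - (-1 : ℂ) ^ i * pb i = 0 := by
              rw [claim1 i (by omega), ihs i hlt (by omega)]
              ring
            rw [hz]
            ring
          · have hlt2 : 2 * s - i < s := by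
              have := Nat.lt_succ_iff.mp (Finset.mem_range.mp hi)
              omega
            have hz : pa (2 * s - i) - (-1 : ℂ) ^ (2 * s - i) * pb (2 * s - i) = 0 := by
              rw [claim1 (2 * s - i) (by omega), ihs (2 * s - i) hlt2 (by omega)]
              ring
            rw [hz]
            ring
      rw [hsingle] at hD
      have hne1 := pow_ne_zero s ((by norm_num : (-1:ℂ) ≠ 0))
      have : (-1 : ℂ) ^ s * pb s = 0 := by
        rcases mul_eq_zero.mp hD with h | h
        · rcases mul_eq_zero.mp h with h' | h'
          · exact absurd h' hne1
          · exact h'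
        · exact h
      rcases mul_eq_zero.mp this with h | h
      · exact absurd h hne1
      · exact h
  -- step 4: the middle coordinate
  have hDm := hDzero m (le_refl m)
  have hsingle : ∑ i ∈ Finset.range (2 * m + 1),
      (-1 : ℂ) ^ (2 * m - i) * (pa i - (-1 : ℂ) ^ i * pb i)
        * (pa (2 * m - i) - (-1 : ℂ) ^ (2 * m - i) * pb (2 * m - i))
      = (-1 : ℂ) ^ m * (pa m - (-1 : ℂ) ^ m * pb m) * (pa m - (-1 : ℂ) ^ m * pb m) := by
    have hm1 : 2 * m - m = m := by omega
    rw [Finset.sum_eq_single_of_mem m (Finset.mem_range.mpr (by omega))]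
    · rw [hm1]
    · intro i hi hne
      rcases lt_or_gt_of_ne hne with hlt | hgt
      · have hz : pa i - (-1 : ℂ) ^ i * pb i = 0 := by
          rw [claim1 i hlt, claim2 i hlt]
          ring
        rw [hz]
        ring
      · have hlt2 : 2 * m - i < m := by
          have := Nat.lt_succ_iff.mp (Finset.mem_range.mp hi)
          omega
        have hz : pa (2 * m - i) - (-1 : ℂ) ^ (2 * m - i) * pb (2 * m - i) = 0 := by
          rw [claim1 (2 * m - i) hlt2, claim2 (2 * m - i) hlt2]
          ring
        rw [hz]
        ring
  rw [hsingle] at hDm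
  have hne1 := pow_ne_zero m ((by norm_num : (-1:ℂ) ≠ 0))
  have hmid : pa m - (-1 : ℂ) ^ m * pb m = 0 := by
    rcases mul_eq_zero.mp hDm with h | h
    · rcases mul_eq_zero.mp h with h' | h'
      · exact absurd h' hne1
      · exact h'
    · exact h
  constructor
  · intro i hi
    have hile : (i : ℕ) ≤ 2 * m := by omega
    constructor
    · have := claim1 (i : ℕ) hi
      rw [hpa, GaMain.pad_eq m a hile] at this
      rwa [show (⟨(i : ℕ), by omega⟩ : Fin (2 * m + 1)) = i from Fin.ext rfl] at this
    · have := claim2 (i : ℕ) hi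
      rw [hpb, GaMain.pad_eq m b hile] at this
      rwa [show (⟨(i : ℕ), by omega⟩ : Fin (2 * m + 1)) = i from Fin.ext rfl] at this
  · have hp : pa m = (-1 : ℂ) ^ m * pb m := sub_eq_zero.mp hmid
    have hval : b ⟨m, by omega⟩ = pb m := by
      rw [hpb, GaMain.pad_eq m b (by omega : m ≤ 2 * m)]
    have hval2 : a ⟨m, by omega⟩ = pa m := by
      rw [hpa, GaMain.pad_eq m a (by omega : m ≤ 2 * m)]
    rw [hval, hval2, hp]
    rw [← mul_assoc, ← pow_add]
    have : (-1 : ℂ) ^ (m + m) = 1 := by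
      rw [← two_mul]
      exact Even.neg_one_pow (even_two_mul m)
    rw [this, one_mul]
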